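/- For every integer k ≥ 1, every real number x, and every integer j with 1 ≤ j ≤ k, the identity Σ_{i=0}^{k-1} x^i · (2k-j)_{k-i} · (k-1+i)!/((k-1-i)!·i!) = ((j-1)!·(2k-j)!/(k-1)!) · Σ_{ℓ=0}^{j-1} C(k-1,ℓ)·C(k-1,j-1-ℓ)·x^ℓ·(1+x)^{k-1-ℓ} holds, where (m)_n denotes the falling factorial and C(a,b) the binomial coefficient. -/

import Mathlib

open Finset Nat

-- Vandermonde in the form we need
lemma vand (n i s : ℕ) :
    (n + i).choose s = ∑ l ∈ range (s + 1), n.choose (s - l) * i.choose l := by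
  rw [Nat.add_comm n i, Nat.add_choose_eq,
    Finset.Nat.sum_antidiagonal_eq_sum_range_succ (fun a b => i.choose a * n.choose b)]
  exact Finset.sum_congr rfl fun l _ => Nat.mul_comm _ _

-- ∑ x^i C(n,i) C(i,l) = C(n,l) x^l (1+x)^(n-l)
lemma sumC (n l : ℕ) (hl : l ≤ n) (x : ℝ) :
    ∑ i ∈ range (n + 1), x ^ i * (n.choose i : ℝ) * (i.choose l : ℝ)
      = (n.choose l : ℝ) * x ^ l * (1 + x) ^ (n - l) := by
  have hsub : Finset.Ico l (n + 1) ⊆ range (n + 1) := by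
    intro a ha; simp at ha ⊢; omega
  rw [← Finset.sum_subset hsub (by
    intro i hi hni
    simp only [Finset.mem_range] at hi
    simp only [Finset.mem_Ico] at hni
    have : i < l := by omega
    rw [Nat.choose_eq_zero_of_lt this]
    simp)]
  rw [Finset.sum_Ico_eq_sum_range]
  have hnl : n + 1 - l = (n - l) + 1 := by omega
  rw [hnl]
  have key : ∀ t ∈ range ((n - l) + 1),
      x ^ (l + t) * (n.choose (l + t) : ℝ) * ((l + t).choose l : ℝ)
        = (n.choose l : ℝ) * x ^ l * (x ^ t * ((n - l).choose t : ℝ)) := by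
    intro t ht
    simp only [Finset.mem_range] at ht
    have h1 : n.choose (l + t) * (l + t).choose l = n.choose l * (n - l).choose t := by
      have := Nat.choose_mul (n := n) (show l ≤ l + t by omega)
      simpa using this
    have h1' : (n.choose (l + t) : ℝ) * ((l + t).choose l : ℝ)
        = (n.choose l : ℝ) * ((n - l).choose t : ℝ) := by exact_mod_cast h1
    rw [pow_add]
    calc x ^ l * x ^ t * (n.choose (l + t) : ℝ) * ((l + t).choose l : ℝ)
        = x ^ l * x ^ t * ((n.choose (l + t) : ℝ) * ((l + t).choose l : ℝ)) := by ring
      _ = x ^ l * x ^ t * ((n.choose l : ℝ) * ((n - l).choose t : ℝ)) := by rw [h1']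
      _ = (n.choose l : ℝ) * x ^ l * (x ^ t * ((n - l).choose t : ℝ)) := by ring
  rw [Finset.sum_congr rfl key, ← Finset.mul_sum]
  congr 1
  rw [add_comm (1:ℝ) x, add_pow]
  simp

-- the coefficient identity over ℕ (cast to ℤ implicitly)
lemma natA (n s i : ℕ) (hs : s ≤ n) (hi : i ≤ n) :
    ((2 * n + 1 - s).descFactorial (n + 1 - i)) * (n + i)! * n !
      = s ! * (2 * n + 1 - s)! * (n.choose i * (n + i).choose s * ((n - i)! * i !)) := by
  have e1 : (n + i - s)! * (2 * n + 1 - s).descFactorial (n + 1 - i) = (2 * n + 1 - s)! := by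
    have h := Nat.factorial_mul_descFactorial (show n + 1 - i ≤ 2 * n + 1 - s by omega)
    rwa [show 2 * n + 1 - s - (n + 1 - i) = n + i - s by omega] at h
  have e2 : n.choose i * i ! * (n - i)! = n ! := Nat.choose_mul_factorial_mul_factorial hi
  have e3 : (n + i).choose s * s ! * (n + i - s)! = (n + i)! :=
    Nat.choose_mul_factorial_mul_factorial (by omega)
  zify
  have e1' : ((n + i - s)! : ℤ) * ((2 * n + 1 - s).descFactorial (n + 1 - i) : ℤ)
      = ((2 * n + 1 - s)! : ℤ) := by exact_mod_cast e1
  have e2' : (n.choose i : ℤ) * (i ! : ℤ) * ((n - i)! : ℤ) = (n ! : ℤ) := by exact_mod_cast e2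
  have e3' : ((n + i).choose s : ℤ) * (s ! : ℤ) * ((n + i - s)! : ℤ) = ((n + i)! : ℤ) := by
    exact_mod_cast e3
  linear_combination (((s !) : ℤ) * (n.choose i) * ((n + i).choose s) * (i !) * ((n - i)!)) * e1'
    - (((2 * n + 1 - s).descFactorial (n + 1 - i) : ℤ) * ((n + i)! : ℤ)) * e2'
    - (((2 * n + 1 - s).descFactorial (n + 1 - i) : ℤ) * (n.choose i : ℤ) * (i ! : ℤ) * ((n - i)! : ℤ)) * e3'

-- the coefficient identity over ℝ
lemma realA (n s i : ℕ) (hs : s ≤ n) (hi : i ≤ n) (x : ℝ) :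
    x ^ i * ((2 * n + 1 - s).descFactorial (n + 1 - i) : ℝ) * ((n + i)! : ℝ)
        / (((n - i)! : ℝ) * (i ! : ℝ))
      = ((s ! : ℝ) * ((2 * n + 1 - s)! : ℝ) / (n ! : ℝ))
        * (x ^ i * (n.choose i : ℝ) * ((n + i).choose s : ℝ)) := by
  have hB : ((n - i)! : ℝ) ≠ 0 := by positivity
  have hI : ((i)! : ℝ) ≠ 0 := by positivity
  have hN : ((n)! : ℝ) ≠ 0 := by positivity
  have h := natA n s i hs hi
  have h' : ((2 * n + 1 - s).descFactorial (n + 1 - i) : ℝ) * ((n + i)! : ℝ) * (n ! : ℝ)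
      = (s ! : ℝ) * ((2 * n + 1 - s)! : ℝ)
        * ((n.choose i : ℝ) * ((n + i).choose s : ℝ) * (((n - i)! : ℝ) * (i ! : ℝ))) := by
    exact_mod_cast h
  field_simp
  linear_combination (x ^ i) * h'

/-- For `k ≥ 1`, `x ∈ ℝ`, `1 ≤ j ≤ k`:
`∑_{i=0}^{k-1} x^i (2k-j)_{k-i} (k-1+i)!/((k-1-i)! i!)
 = ((j-1)!(2k-j)!/(k-1)!) ∑_{ℓ=0}^{j-1} C(k-1,ℓ) C(k-1,j-1-ℓ) x^ℓ (1+x)^{k-1-ℓ}`. -/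
theorem stmt_2 (k : ℕ) (hk : 1 ≤ k) (x : ℝ) (j : ℕ) (hj1 : 1 ≤ j) (hj2 : j ≤ k) :
    ∑ i ∈ Finset.range k,
      x ^ i * (Nat.descFactorial (2 * k - j) (k - i) : ℝ) *
        (Nat.factorial (k - 1 + i) : ℝ) /
          ((Nat.factorial (k - 1 - i) : ℝ) * (Nat.factorial i : ℝ))
    = ((Nat.factorial (j - 1) : ℝ) * (Nat.factorial (2 * k - j) : ℝ) /
        (Nat.factorial (k - 1) : ℝ)) *
      ∑ l ∈ Finset.range j,
        (Nat.choose (k - 1) l : ℝ) * (Nat.choose (k - 1) (j - 1 - l) : ℝ) *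
          x ^ l * (1 + x) ^ (k - 1 - l) := by
  obtain ⟨n, rfl⟩ : ∃ n, k = n + 1 := ⟨k - 1, by omega⟩
  obtain ⟨s, rfl⟩ : ∃ s, j = s + 1 := ⟨j - 1, by omega⟩
  have hs : s ≤ n := by omega
  have h2 : 2 * (n + 1) - (s + 1) = 2 * n + 1 - s := by omega
  simp only [h2, Nat.add_sub_cancel]
  have inner : ∑ i ∈ Finset.range (n + 1), x ^ i * (n.choose i : ℝ) * ((n + i).choose s : ℝ)
      = ∑ l ∈ Finset.range (s + 1),
          (n.choose (s - l) : ℝ) * ((n.choose l : ℝ) * x ^ l * (1 + x) ^ (n - l)) := by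
    have step1 : ∀ i ∈ Finset.range (n + 1),
        x ^ i * (n.choose i : ℝ) * ((n + i).choose s : ℝ)
          = ∑ l ∈ Finset.range (s + 1),
              (n.choose (s - l) : ℝ) * (x ^ i * (n.choose i : ℝ) * (i.choose l : ℝ)) := by
      intro i _
      rw [vand n i s]
      push_cast
      rw [Finset.mul_sum]
      exact Finset.sum_congr rfl fun l _ => by ring
    rw [Finset.sum_congr rfl step1, Finset.sum_comm]
    refine Finset.sum_congr rfl fun l hl => ?_
    rw [← Finset.mul_sum, sumC n l (by simp at hl; omega) x]
  calc ∑ i ∈ Finset.range (n + 1),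
        x ^ i * ((2 * n + 1 - s).descFactorial (n + 1 - i) : ℝ) * ((n + i)! : ℝ)
          / (((n - i)! : ℝ) * ((i)! : ℝ))
      = ∑ i ∈ Finset.range (n + 1),
          ((s ! : ℝ) * ((2 * n + 1 - s)! : ℝ) / ((n)! : ℝ))
            * (x ^ i * (n.choose i : ℝ) * ((n + i).choose s : ℝ)) := by
        refine Finset.sum_congr rfl fun i hi => ?_
        exact realA n s i hs (by simp at hi; omega) x
    _ = ((s ! : ℝ) * ((2 * n + 1 - s)! : ℝ) / ((n)! : ℝ))
          * ∑ i ∈ Finset.range (n + 1),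
              x ^ i * (n.choose i : ℝ) * ((n + i).choose s : ℝ) := by
        rw [Finset.mul_sum]
    _ = ((s ! : ℝ) * ((2 * n + 1 - s)! : ℝ) / ((n)! : ℝ))
          * ∑ l ∈ Finset.range (s + 1),
              (n.choose l : ℝ) * (n.choose (s - l) : ℝ) * x ^ l * (1 + x) ^ (n - l) := by
        rw [inner]
        congr 1
        exact Finset.sum_congr rfl fun l _ => by ring
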